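/- Let (S_k)_{k≥1} be finite subsets of ℝ² and δ_k > 0 with ∑_{k≥1} |S_k| δ_k < ∞, and set G := ⋂_{n≥1} ⋃_{k≥n} B(S_k,δ_k). Let v ∈ S¹, θ ∈ (0,1), and let γ : I → ℝ² be a C¹ curve with γ'(t) ∈ C(v,θ) for all t ∈ I. Then γ⁻¹(G) has Lebesgue measure zero. -/

import Mathlib

open MeasureTheory Filter Metric Set Topology RealInnerProductSpace

noncomputable section

/-- The Euclidean plane. -/
abbrev E2 := EuclideanSpace ℝ (Fin 2)

/-- `IsC1Curve a b γ γ'` : `γ` restricted to the compact nondegenerate interval `[a,b]`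
is a C¹ curve with (one-sided at endpoints) derivative `γ'`, continuous and of unit
norm on `[a,b]`. -/
def IsC1Curve (a b : ℝ) (γ γ' : ℝ → E2) : Prop :=
  a < b ∧ ContinuousOn γ' (Set.Icc a b) ∧
    (∀ t ∈ Set.Icc a b, HasDerivWithinAt γ (γ' t) (Set.Icc a b) t) ∧
    (∀ t ∈ Set.Icc a b, ‖γ' t‖ = 1)

/-- The cone `C(w,α) = {v ∈ S¹ : ⟨v,w⟩ ≥ 1 − α}`. -/
def cone (w : E2) (α : ℝ) : Set E2 :=
  {v ∈ sphere (0:E2) 1 | 1 - α ≤ ⟪v, w⟫}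

/-- Let `S_k ⊆ ℝ²` be finite, `δ_k > 0` with `∑ |S_k| δ_k < ∞`, and
`G = ⋂_n ⋃_{k≥n} B(S_k,δ_k)`. Every C¹ curve whose tangents lie in a cone `C(v,θ)`,
`θ ∈ (0,1)`, meets `G` in a set of Lebesgue measure zero. -/
theorem stmt12 (S : ℕ → Set E2) (hS : ∀ k, (S k).Finite)
    (δ : ℕ → ℝ) (hδ : ∀ k, 0 < δ k)
    (hsum : Summable fun k => ((S k).ncard : ℝ) * δ k)
    (G : Set E2)
    (hG : G = ⋂ n : ℕ, ⋃ k, ⋃ _ : n ≤ k, Metric.thickening (δ k) (S k))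
    (v : E2) (hv : v ∈ sphere (0:E2) 1) (θ : ℝ) (hθ : θ ∈ Set.Ioo (0:ℝ) 1)
    (a b : ℝ) (γ γ' : ℝ → E2) (hγ : IsC1Curve a b γ γ')
    (hdir : ∀ t ∈ Set.Icc a b, γ' t ∈ cone v θ) :
    volume (γ ⁻¹' G ∩ Set.Icc a b) = 0 := by
  obtain ⟨hab, hcont', hderiv, hnorm⟩ := hγ
  obtain ⟨hθ0, hθ1⟩ := hθ
  have h1θ : (0:ℝ) < 1 - θ := by linarith
  have hvnorm : ‖v‖ = 1 := by simpa using hv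
  have hγcont : ContinuousOn γ (Set.Icc a b) := fun t ht =>
    (hderiv t ht).continuousWithinAt
  -- monotonicity of t ↦ ⟪γ t, v⟫ - (1-θ) t
  have hmono : MonotoneOn (fun t => ⟪γ t, v⟫ - (1 - θ) * t) (Set.Icc a b) := by
    apply monotoneOn_of_hasDerivWithinAt_nonneg (f' := fun t => ⟪γ' t, v⟫ - (1 - θ))
      (convex_Icc a b)
    · exact ((continuous_inner.comp_continuousOn (hγcont.prodMk continuousOn_const))).sub
        (continuousOn_const.mul continuousOn_id)
    · intro x hx
      have hx' : x ∈ Set.Icc a b := interior_subset hx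
      have h1 : HasDerivWithinAt (fun t => ⟪γ t, v⟫) (⟪γ x, (0:E2)⟫ + ⟪γ' x, v⟫)
          (Set.Icc a b) x :=
        HasDerivWithinAt.inner ℝ (hderiv x hx') (hasDerivWithinAt_const x _ v)
      have h2 : HasDerivWithinAt (fun t => ⟪γ t, v⟫ - (1 - θ) * t)
          (⟪γ' x, v⟫ - (1 - θ)) (Set.Icc a b) x := by
        have h3 := h1.sub ((hasDerivWithinAt_id x _).const_mul (1 - θ))
        simp only [inner_zero_right, zero_add, mul_one] at h3
        exact h3
      exact h2.mono interior_subset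
    · intro x hx
      have := (hdir x (interior_subset hx)).2
      simpa using sub_nonneg.2 this
  have key : ∀ s ∈ Set.Icc a b, ∀ t ∈ Set.Icc a b, s ≤ t →
      (1 - θ) * (t - s) ≤ ⟪γ t - γ s, v⟫ := by
    intro s hs t ht hst
    have h := hmono hs ht hst
    simp only at h
    rw [inner_sub_left]
    linarith
  -- bound for the preimage of a single ball
  have ball_bound : ∀ (x : E2) (r : ℝ), 0 < r →
      volume (γ ⁻¹' Metric.ball x r ∩ Set.Icc a b) ≤ ENNReal.ofReal (4 * r / (1 - θ)) := by
    intro x r hr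
    rcases Set.eq_empty_or_nonempty (γ ⁻¹' Metric.ball x r ∩ Set.Icc a b) with h | ⟨t0, ht0⟩
    · simp [h]
    have hsub : γ ⁻¹' Metric.ball x r ∩ Set.Icc a b ⊆
        Set.Icc (t0 - 2 * r / (1 - θ)) (t0 + 2 * r / (1 - θ)) := by
      intro t ht
      have hdist : ∀ u, u ∈ γ ⁻¹' Metric.ball x r ∩ Set.Icc a b →
          ∀ w, w ∈ γ ⁻¹' Metric.ball x r ∩ Set.Icc a b → w ≤ u →
          u - w ≤ 2 * r / (1 - θ) := by
        intro u hu w hw hwu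
        have h1 : (1 - θ) * (u - w) ≤ ⟪γ u - γ w, v⟫ := key w hw.2 u hu.2 hwu
        have h2 : ⟪γ u - γ w, v⟫ ≤ ‖γ u - γ w‖ := by
          calc ⟪γ u - γ w, v⟫ ≤ ‖γ u - γ w‖ * ‖v‖ := real_inner_le_norm _ _
            _ = ‖γ u - γ w‖ := by rw [hvnorm, mul_one]
        have h3 : ‖γ u - γ w‖ < 2 * r := by
          have hu' : dist (γ u) x < r := hu.1
          have hw' : dist (γ w) x < r := hw.1
          calc ‖γ u - γ w‖ = dist (γ u) (γ w) := (dist_eq_norm _ _).symm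
            _ ≤ dist (γ u) x + dist x (γ w) := dist_triangle _ _ _
            _ < 2 * r := by rw [dist_comm x (γ w)]; linarith
        have h4 : (1 - θ) * (u - w) ≤ 2 * r := by linarith
        rw [div_eq_mul_inv]
        calc u - w = ((1 - θ) * (u - w)) * (1 - θ)⁻¹ := by
              field_simp
          _ ≤ (2 * r) * (1 - θ)⁻¹ :=
              mul_le_mul_of_nonneg_right h4 (by positivity)
      constructor
      · rcases le_total t t0 with h | h
        · have := hdist t0 ht0 t ht h
          linarith
        · have : 0 ≤ 2 * r / (1 - θ) := by positivity
          linarith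
      · rcases le_total t0 t with h | h
        · have := hdist t ht t0 ht0 h
          linarith
        · have : 0 ≤ 2 * r / (1 - θ) := by positivity
          linarith
    calc volume (γ ⁻¹' Metric.ball x r ∩ Set.Icc a b)
        ≤ volume (Set.Icc (t0 - 2 * r / (1 - θ)) (t0 + 2 * r / (1 - θ))) :=
          measure_mono hsub
      _ = ENNReal.ofReal (4 * r / (1 - θ)) := by
          rw [Real.volume_Icc]
          congr 1
          ring
  -- bound for thickening of a finite set
  have thick_bound : ∀ k : ℕ,
      volume (γ ⁻¹' Metric.thickening (δ k) (S k) ∩ Set.Icc a b) ≤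
        ENNReal.ofReal ((4 / (1 - θ)) * (((S k).ncard : ℝ) * δ k)) := by
    intro k
    have hthick : Metric.thickening (δ k) (S k) = ⋃ x ∈ (hS k).toFinset, Metric.ball x (δ k) := by
      rw [Metric.thickening_eq_biUnion_ball]
      simp [Set.Finite.mem_toFinset]
    have hsub : γ ⁻¹' Metric.thickening (δ k) (S k) ∩ Set.Icc a b ⊆
        ⋃ x ∈ (hS k).toFinset, (γ ⁻¹' Metric.ball x (δ k) ∩ Set.Icc a b) := by
      rw [hthick]
      intro t ⟨ht1, ht2⟩
      simp only [Set.mem_preimage, Set.mem_iUnion] at ht1 ⊢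
      obtain ⟨x, hx, hxt⟩ := ht1
      exact ⟨x, hx, hxt, ht2⟩
    calc volume (γ ⁻¹' Metric.thickening (δ k) (S k) ∩ Set.Icc a b)
        ≤ ∑ x ∈ (hS k).toFinset, volume (γ ⁻¹' Metric.ball x (δ k) ∩ Set.Icc a b) :=
          (measure_mono hsub).trans (measure_biUnion_finset_le _ _)
      _ ≤ ∑ x ∈ (hS k).toFinset, ENNReal.ofReal (4 * δ k / (1 - θ)) :=
          Finset.sum_le_sum fun x _ => ball_bound x (δ k) (hδ k)
      _ = ((S k).ncard : ENNReal) * ENNReal.ofReal (4 * δ k / (1 - θ)) := by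
          rw [Finset.sum_const, nsmul_eq_mul, Set.ncard_eq_toFinset_card (S k) (hS k)]
      _ = ENNReal.ofReal ((4 / (1 - θ)) * (((S k).ncard : ℝ) * δ k)) := by
          rw [← ENNReal.ofReal_natCast, ← ENNReal.ofReal_mul (by positivity)]
          congr 1
          field_simp
  set g : ℕ → ENNReal := fun k => ENNReal.ofReal ((4 / (1 - θ)) * (((S k).ncard : ℝ) * δ k)) with hg
  have hsum' : Summable fun k => (4 / (1 - θ)) * (((S k).ncard : ℝ) * δ k) := hsum.mul_left _
  have hgsum : ∑' k, g k ≠ ⊤ := by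
    rw [hg, ← ENNReal.ofReal_tsum_of_nonneg (fun k => mul_nonneg (div_nonneg (by norm_num) h1θ.le) (mul_nonneg (Nat.cast_nonneg _) (hδ k).le)) hsum']
    exact ENNReal.ofReal_ne_top
  have hbound : ∀ n : ℕ, volume (γ ⁻¹' G ∩ Set.Icc a b) ≤ ∑' j, g (j + n) := by
    intro n
    have hGsub : G ⊆ ⋃ k, ⋃ _ : n ≤ k, Metric.thickening (δ k) (S k) := by
      rw [hG]; exact Set.iInter_subset _ n
    have hsub : γ ⁻¹' G ∩ Set.Icc a b ⊆
        ⋃ j : ℕ, (γ ⁻¹' Metric.thickening (δ (j + n)) (S (j + n)) ∩ Set.Icc a b) := by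
      intro t ⟨ht1, ht2⟩
      have := hGsub ht1
      simp only [Set.mem_iUnion] at this ⊢
      obtain ⟨k, hk, hkt⟩ := this
      exact ⟨k - n, by rw [Nat.sub_add_cancel hk]; exact ⟨hkt, ht2⟩⟩
    calc volume (γ ⁻¹' G ∩ Set.Icc a b)
        ≤ ∑' j : ℕ, volume (γ ⁻¹' Metric.thickening (δ (j + n)) (S (j + n)) ∩ Set.Icc a b) :=
          (measure_mono hsub).trans (measure_iUnion_le _)
      _ ≤ ∑' j, g (j + n) := ENNReal.tsum_le_tsum fun j => thick_bound (j + n)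
  have htend : Tendsto (fun n => ∑' j, g (j + n)) atTop (𝓝 0) :=
    ENNReal.tendsto_sum_nat_add g hgsum
  have : volume (γ ⁻¹' G ∩ Set.Icc a b) ≤ 0 := ge_of_tendsto' htend hbound
  exact le_antisymm this zero_le

end
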